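/- Let R be a commutative ring and f_1, ..., f_m ∈ R a regular sequence. Then the Koszul complex K(f_1,...,f_m): 0 → R ⊗ Λ^m(C^m) → ... → R ⊗ Λ^1(C^m) → R → 0, with differential determined by the f_i, is a free resolution of R/(f_1,...,f_m); that is, its homology vanishes in positive degrees and equals R/(f_1,...,f_m) in degree zero. -/

import Mathlib

noncomputable section

/-- The terms of the Koszul complex of `m` elements of `R`:
`K p = R ⊗ Λ^p(ℂ^m)` is realized as the free `R`-module on the set of
`p`-element subsets of `{1, ..., m}`. -/
def KoszulTerm (R : Type*) (m p : ℕ) := {s : Finset (Fin m) // s.card = p} → R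

/-- The Koszul differential `K(p+1) → K p` determined by `f₁, ..., f_m`:
`e_{i₁} ∧ ... ∧ e_{i_{p+1}} ↦ Σ_j (−1)^{j−1} f_{i_j} · e_{i₁} ∧ ... ∧ ê_{i_j} ∧ ...`. -/
def koszulD {R : Type*} [CommRing R] {m : ℕ} (f : Fin m → R) (p : ℕ)
    (x : KoszulTerm R m (p + 1)) : KoszulTerm R m p :=
  fun t => ∑ i : Fin m,
    if h : i ∉ t.1 then
      (-1 : R) ^ ((t.1.filter (fun j => j < i)).card) * f i *
        x ⟨insert i t.1, by rw [Finset.card_insert_of_notMem h, t.2]⟩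
    else 0

namespace KoszulAux

variable {R : Type*} [CommRing R] {m : ℕ}

/-- `castSucc` as an embedding. -/
def E (m : ℕ) : Fin m ↪ Fin (m + 1) := ⟨Fin.castSucc, Fin.castSucc_injective m⟩

def up (t : Finset (Fin m)) : Finset (Fin (m + 1)) := t.map (E m)

lemma mem_up {i : Fin m} {t : Finset (Fin m)} : Fin.castSucc i ∈ up t ↔ i ∈ t :=
  Finset.mem_map' _

lemma last_not_mem_up (t : Finset (Fin m)) : Fin.last m ∉ up t := by
  simp only [up, Finset.mem_map, E, Function.Embedding.coeFn_mk]
  rintro ⟨i, -, h⟩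
  exact (Fin.castSucc_lt_last i).ne h

@[simp] lemma card_up (t : Finset (Fin m)) : (up t).card = t.card := Finset.card_map _

lemma up_insert (i : Fin m) (t : Finset (Fin m)) :
    up (insert i t) = insert (Fin.castSucc i) (up t) := Finset.map_insert _ _ _

def down (s : Finset (Fin (m + 1))) : Finset (Fin m) :=
  s.preimage Fin.castSucc (Fin.castSucc_injective m).injOn

lemma mem_down {i : Fin m} {s : Finset (Fin (m + 1))} :
    i ∈ down s ↔ Fin.castSucc i ∈ s := Finset.mem_preimage

lemma down_up (t : Finset (Fin m)) : down (up t) = t := by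
  ext i; rw [mem_down, mem_up]

lemma up_down {s : Finset (Fin (m + 1))} (hs : Fin.last m ∉ s) : up (down s) = s := by
  ext j
  simp only [up, Finset.mem_map, E, Function.Embedding.coeFn_mk]
  constructor
  · rintro ⟨i, hi, rfl⟩; exact mem_down.mp hi
  · intro hj
    obtain ⟨i, rfl⟩ := Fin.exists_castSucc_eq.mpr (fun h => hs (h ▸ hj))
    exact ⟨i, mem_down.mpr hj, rfl⟩

lemma card_down {s : Finset (Fin (m + 1))} (hs : Fin.last m ∉ s) :
    (down s).card = s.card := by
  conv_rhs => rw [← up_down hs]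
  rw [card_up]

lemma filter_up_lt (t : Finset (Fin m)) (i : Fin m) :
    ((up t).filter (fun j => j < Fin.castSucc i)).card
      = (t.filter (fun j => j < i)).card := by
  rw [up, Finset.filter_map, Finset.card_map]
  congr 1

lemma filter_insert_last (u : Finset (Fin m)) (i : Fin m) :
    ((insert (Fin.last m) (up u)).filter (fun j => j < Fin.castSucc i)).card
      = (u.filter (fun j => j < i)).card := by
  rw [Finset.filter_insert, if_neg (by exact fun h => absurd (Fin.castSucc_lt_last i) (asymm h)),
    filter_up_lt]

lemma filter_up_lt_last (t : Finset (Fin m)) :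
    ((up t).filter (fun j => j < Fin.last m)).card = t.card := by
  rw [Finset.filter_true_of_mem, card_up]
  intro j hj
  simp only [up, Finset.mem_map, E, Function.Embedding.coeFn_mk] at hj
  obtain ⟨i, -, rfl⟩ := hj
  exact Fin.castSucc_lt_last i


variable (f : Fin (m + 1) → R)

lemma lemA (q : ℕ) (x : KoszulTerm R (m + 1) (q + 1)) (t : Finset (Fin m))
    (ht : t.card = q) :
    koszulD f q x ⟨up t, by rw [card_up, ht]⟩ =
      koszulD (fun i => f i.castSucc) q
          (fun t' => x ⟨up t'.1, by rw [card_up, t'.2]⟩) ⟨t, ht⟩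
        + (-1 : R) ^ q * f (Fin.last m) *
          x ⟨insert (Fin.last m) (up t), by
              rw [Finset.card_insert_of_notMem (last_not_mem_up t), card_up, ht]⟩ := by
  subst ht
  show (∑ i : Fin (m + 1), _) = (∑ i : Fin m, _) + _
  rw [Fin.sum_univ_castSucc]
  congr 1
  · refine Finset.sum_congr rfl fun i _ => ?_
    by_cases h : i ∈ t
    · rw [dif_neg (by simpa using not_not_intro (mem_up.mpr h)), dif_neg (not_not_intro h)]
    · rw [dif_pos (by simpa using fun hh => h (mem_up.mp hh)), dif_pos h]
      rw [filter_up_lt]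
      exact congrArg (_ * ·) (congrArg x (Subtype.ext (up_insert i t).symm))
  · rw [dif_pos (last_not_mem_up t), filter_up_lt_last]

lemma lemB (q : ℕ) (x : KoszulTerm R (m + 1) (q + 2)) (u : Finset (Fin m))
    (hu : u.card = q) :
    koszulD f (q + 1) x
        ⟨insert (Fin.last m) (up u), by
          rw [Finset.card_insert_of_notMem (last_not_mem_up u), card_up, hu]⟩ =
      koszulD (fun i => f i.castSucc) q
        (fun v => x ⟨insert (Fin.last m) (up v.1), by
            rw [Finset.card_insert_of_notMem (last_not_mem_up v.1), card_up, v.2]⟩)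
        ⟨u, hu⟩ := by
  subst hu
  show (∑ i : Fin (m + 1), _) = (∑ i : Fin m, _)
  rw [Fin.sum_univ_castSucc]
  rw [dif_neg (not_not_intro (Finset.mem_insert_self _ _)), add_zero]
  refine Finset.sum_congr rfl fun i _ => ?_
  by_cases h : i ∈ u
  · rw [dif_neg (not_not_intro (Finset.mem_insert_of_mem (mem_up.mpr h))),
      dif_neg (not_not_intro h)]
  · have hni : Fin.castSucc i ∉ insert (Fin.last m) (up u) := by
      simp only [Finset.mem_insert, not_or]
      exact ⟨(Fin.castSucc_lt_last i).ne, fun hh => h (mem_up.mp hh)⟩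
    rw [dif_pos hni, dif_pos h]
    rw [filter_insert_last]
    exact congrArg (_ * ·) (congrArg x (Subtype.ext (by
      show insert (Fin.castSucc i) (insert (Fin.last m) (up u))
          = insert (Fin.last m) (up (insert i u))
      rw [Finset.insert_comm, up_insert])))


/-- Combine a `(q+1)`-cochain and a `q`-cochain on `Fin m` into a
`(q+1)`-cochain on `Fin (m+1)`. -/
def glue {q : ℕ} (A : KoszulTerm R m (q + 1)) (B : KoszulTerm R m q) :
    KoszulTerm R (m + 1) (q + 1) :=
  fun s => if h : Fin.last m ∈ s.1 then
      B ⟨down (s.1.erase (Fin.last m)), by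
        rw [card_down (Finset.notMem_erase _ _), Finset.card_erase_of_mem h, s.2]
        omega⟩
    else A ⟨down s.1, by rw [card_down h, s.2]⟩

lemma glue_up {q : ℕ} (A : KoszulTerm R m (q + 1)) (B : KoszulTerm R m q)
    (t : Finset (Fin m)) (h : (up t).card = q + 1) :
    glue A B ⟨up t, h⟩ = A ⟨t, by rw [← card_up, h]⟩ := by
  rw [glue, dif_neg (last_not_mem_up t)]
  exact congrArg A (Subtype.ext (down_up t))

lemma glue_insert {q : ℕ} (A : KoszulTerm R m (q + 1)) (B : KoszulTerm R m q)
    (u : Finset (Fin m)) (h : (insert (Fin.last m) (up u)).card = q + 1) :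
    glue A B ⟨insert (Fin.last m) (up u), h⟩ = B ⟨u, by
      rw [Finset.card_insert_of_notMem (last_not_mem_up u), card_up] at h
      omega⟩ := by
  rw [glue, dif_pos (Finset.mem_insert_self _ _)]
  refine congrArg B (Subtype.ext ?_)
  show down ((insert (Fin.last m) (up u)).erase (Fin.last m)) = u
  rw [Finset.erase_insert (last_not_mem_up u), down_up]

/-- Linearity of the Koszul differential used in the main argument. -/
lemma koszulD_sub_smul {m : ℕ} (g : Fin m → R) (p : ℕ) (X Z : KoszulTerm R m (p + 1))
    (r : R) (t : {s : Finset (Fin m) // s.card = p}) :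
    koszulD g p (fun s => X s - r * Z s) t = koszulD g p X t - r * koszulD g p Z t := by
  show (∑ i : Fin m, _) = (∑ i : Fin m, _) - r * (∑ i : Fin m, _)
  rw [Finset.mul_sum, ← Finset.sum_sub_distrib]
  refine Finset.sum_congr rfl fun i _ => ?_
  by_cases h : i ∉ t.1
  · rw [dif_pos h, dif_pos h, dif_pos h]; ring
  · rw [dif_neg h, dif_neg h, dif_neg h]; ring

/-- The index type in degree `0` is a subsingleton. -/
lemma eq_empty_subtype {m : ℕ} (t : {s : Finset (Fin m) // s.card = 0}) :
    t = ⟨∅, Finset.card_empty⟩ :=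
  Subtype.ext (Finset.card_eq_zero.mp t.2)

/-- Degree-zero part: the image of `K 1 → K 0 = R` is the ideal generated by the `f i`. -/
lemma part2 {m : ℕ} (g : Fin m → R) :
    Set.range (fun x : KoszulTerm R m 1 =>
      koszulD g 0 x ⟨∅, Finset.card_empty⟩) = ↑(Ideal.span (Set.range g)) := by
  have key : ∀ x : KoszulTerm R m 1,
      koszulD g 0 x ⟨∅, Finset.card_empty⟩
        = ∑ i : Fin m, x ⟨{i}, Finset.card_singleton i⟩ * g i := by
    intro x
    show (∑ i : Fin m, _) = _
    refine Finset.sum_congr rfl fun i _ => ?_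
    rw [dif_pos (Finset.notMem_empty i)]
    simp only [Finset.filter_empty, Finset.card_empty, pow_zero, one_mul]
    rw [mul_comm]
    exact congrArg (· * g i) (congrArg x (Subtype.ext (by simp)))
  ext r
  constructor
  · rintro ⟨x, rfl⟩
    refine SetLike.mem_coe.mpr ((Submodule.mem_span_range_iff_exists_fun R).mpr
      ⟨fun i => x ⟨{i}, Finset.card_singleton i⟩, ?_⟩)
    show _ = koszulD g 0 x ⟨∅, Finset.card_empty⟩
    rw [key]
    exact Finset.sum_congr rfl fun i _ => smul_eq_mul _ _
  · intro hr
    obtain ⟨c, hc⟩ := (Submodule.mem_span_range_iff_exists_fun R).mp (SetLike.mem_coe.mp hr)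
    refine ⟨fun s => ∑ i ∈ s.1, c i, ?_⟩
    show koszulD g 0 (fun s => ∑ i ∈ s.1, c i) ⟨∅, Finset.card_empty⟩ = r
    refine (key _).trans ?_
    rw [← hc]
    refine Finset.sum_congr rfl fun i _ => ?_
    show (∑ j ∈ ({i} : Finset (Fin m)), c j) * g i = c i • g i
    rw [Finset.sum_singleton, smul_eq_mul]


lemma ofFn_split : List.ofFn f = (List.ofFn fun i => f i.castSucc) ++ [f (Fin.last m)] := by
  rw [List.ofFn_succ', List.concat_eq_append]

lemma weak_prefix (h : RingTheory.Sequence.IsWeaklyRegular R (List.ofFn f)) :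
    RingTheory.Sequence.IsWeaklyRegular R (List.ofFn fun i => f i.castSucc) := by
  constructor
  intro i hi
  have hi' : i < m := by simpa using hi
  have h0 := h.regular_mod_prev i (by simp; omega)
  have e1 : (List.ofFn fun i : Fin m => f i.castSucc).take i = (List.ofFn f).take i := by
    rw [ofFn_split f, List.take_append_of_le_length (by simpa using hi'.le)]
  have e2 : (List.ofFn fun i : Fin m => f i.castSucc)[i]'hi
      = (List.ofFn f)[i]'(by simp; omega) := by
    simp only [List.getElem_ofFn]
    rfl
  rw [e1, e2]
  exact h0

lemma span_eq_ofList :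
    Ideal.ofList (List.ofFn fun i : Fin m => f i.castSucc)
      = Ideal.span (Set.range fun i : Fin m => f i.castSucc) :=
  congrArg Ideal.span (Set.ext fun a => List.mem_ofFn' _ a)

lemma reg_last (h : RingTheory.Sequence.IsWeaklyRegular R (List.ofFn f)) {r : R}
    (hr : f (Fin.last m) * r ∈ Ideal.span (Set.range fun i : Fin m => f i.castSucc)) :
    r ∈ Ideal.span (Set.range fun i : Fin m => f i.castSucc) := by
  have h0 := h.regular_mod_prev m (by simp)
  have e1 : (List.ofFn f).take m = List.ofFn fun i : Fin m => f i.castSucc := by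
    rw [ofFn_split f, List.take_append_of_le_length (by simp),
      List.take_of_length_le (by simp)]
  have e2 : (List.ofFn f)[m]'(by simp) = f (Fin.last m) := by
    simp only [List.getElem_ofFn]
    rfl
  rw [e1, e2, span_eq_ofList f] at h0
  have etop : (Ideal.span (Set.range fun i : Fin m => f i.castSucc) •
      (⊤ : Submodule R R)) = Ideal.span (Set.range fun i : Fin m => f i.castSucc) := by
    rw [Ideal.smul_eq_mul, Ideal.mul_top]
  have hz : f (Fin.last m) • (Submodule.Quotient.mk r :
      R ⧸ (Ideal.span (Set.range fun i : Fin m => f i.castSucc) •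
        (⊤ : Submodule R R))) = f (Fin.last m) • (0 : _) := by
    rw [smul_zero, ← Submodule.Quotient.mk_smul, Submodule.Quotient.mk_eq_zero, etop,
      smul_eq_mul]
    exact hr
  have := h0 hz
  rw [Submodule.Quotient.mk_eq_zero, etop] at this
  exact this


/-- Main acyclicity lemma: for a weakly regular sequence, every positive-degree
cycle in the Koszul complex is a boundary.  Induction on `m`. -/
lemma main : ∀ (m : ℕ) (f : Fin m → R),
    RingTheory.Sequence.IsWeaklyRegular R (List.ofFn f) →
    ∀ (p : ℕ) (x : KoszulTerm R m (p + 1)), (∀ t, koszulD f p x t = 0) →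
      ∃ y : KoszulTerm R m (p + 2), koszulD f (p + 1) y = x := by
  intro m
  induction m with
  | zero =>
    intro f _ p x _
    refine ⟨fun _ => 0, funext fun t => ?_⟩
    exfalso
    have h := t.2
    rw [Finset.eq_empty_of_isEmpty t.1] at h
    simp at h
  | succ m ih =>
    intro f hw p x hcyc
    have hw' := weak_prefix f hw
    -- Step 1: produce `c` with `d' c = b x` (the component of `x` containing `last`).
    obtain ⟨c, hc⟩ : ∃ c : KoszulTerm R m (p + 1),
        koszulD (fun i => f i.castSucc) p c
          = (fun v : {s : Finset (Fin m) // s.card = p} =>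
              x ⟨insert (Fin.last m) (up v.1), by
                rw [Finset.card_insert_of_notMem (last_not_mem_up v.1), card_up, v.2]⟩) := by
      cases p with
      | zero =>
        have h1 := lemA f 0 x ∅ Finset.card_empty
        rw [hcyc] at h1
        rw [pow_zero, one_mul] at h1
        have hmem : koszulD (fun i => f i.castSucc) 0
            (fun t' => x ⟨up t'.1, by rw [card_up, t'.2]⟩) ⟨∅, Finset.card_empty⟩
            ∈ Ideal.span (Set.range fun i : Fin m => f i.castSucc) := by
          rw [← SetLike.mem_coe, ← part2 (fun i : Fin m => f i.castSucc)]
          exact ⟨_, rfl⟩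
        have hmul : f (Fin.last m) * x ⟨insert (Fin.last m) (up ∅), by
              rw [Finset.card_insert_of_notMem (last_not_mem_up ∅), card_up, Finset.card_empty]⟩
            ∈ Ideal.span (Set.range fun i : Fin m => f i.castSucc) := by
          have : f (Fin.last m) * x ⟨insert (Fin.last m) (up ∅), by
              rw [Finset.card_insert_of_notMem (last_not_mem_up ∅), card_up, Finset.card_empty]⟩
              = - koszulD (fun i => f i.castSucc) 0
                  (fun t' => x ⟨up t'.1, by rw [card_up, t'.2]⟩) ⟨∅, Finset.card_empty⟩ := by
            linear_combination -h1
          rw [this]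
          exact neg_mem hmem
        have hb := reg_last f hw hmul
        rw [← SetLike.mem_coe, ← part2 (fun i : Fin m => f i.castSucc)] at hb
        obtain ⟨c, hcval⟩ := hb
        refine ⟨c, funext fun v => ?_⟩
        rw [eq_empty_subtype v]
        exact hcval
      | succ q =>
        refine ih (fun i => f i.castSucc) hw' q _ (fun u => ?_)
        have h1 := lemB f q x u.1 u.2
        rw [hcyc] at h1
        exact h1.symm
    -- Step 2: correct the `a`-component and show it is a cycle over `Fin m`.
    have claim : ∀ t, koszulD (fun i => f i.castSucc) p
        (fun s => (fun t' : {s : Finset (Fin m) // s.card = p + 1} =>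
              x ⟨up t'.1, by rw [card_up, t'.2]⟩) s
            - ((-1 : R) ^ (p + 1) * f (Fin.last m)) * c s) t = 0 := by
      intro t
      refine (koszulD_sub_smul (fun i => f i.castSucc) p
        (fun t' : {s : Finset (Fin m) // s.card = p + 1} => x ⟨up t'.1, by rw [card_up, t'.2]⟩)
        c ((-1 : R) ^ (p + 1) * f (Fin.last m)) t).trans ?_
      rw [hc]
      have h4 := lemA f p x t.1 t.2
      rw [hcyc] at h4
      have h4' := h4.symm
      set D := koszulD (fun i => f i.castSucc) p
        (fun t' => x ⟨up t'.1, by rw [card_up, t'.2]⟩) ⟨t.1, t.2⟩ with hD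
      set B := x ⟨insert (Fin.last m) (up t.1), by
        rw [Finset.card_insert_of_notMem (last_not_mem_up t.1), card_up, t.2]⟩ with hB
      show D - (-1 : R) ^ (p + 1) * f (Fin.last m) * B = 0
      linear_combination h4'
    obtain ⟨A, hA⟩ := ih (fun i => f i.castSucc) hw' p _ claim
    -- Step 3: glue the correcting data into a primitive for `x`.
    refine ⟨glue A c, funext fun s => ?_⟩
    by_cases hL : Fin.last m ∈ s.1
    · have hucard : (down (s.1.erase (Fin.last m))).card = p := by
        rw [card_down (Finset.notMem_erase _ _), Finset.card_erase_of_mem hL, s.2]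
        omega
      have hs : s = ⟨insert (Fin.last m) (up (down (s.1.erase (Fin.last m)))), by
          rw [Finset.card_insert_of_notMem (last_not_mem_up _), card_up, hucard]⟩ := by
        refine Subtype.ext ?_
        show s.1 = insert (Fin.last m) (up (down (s.1.erase (Fin.last m))))
        rw [up_down (Finset.notMem_erase _ _), Finset.insert_erase hL]
      rw [hs, lemB f p (glue A c) _ hucard]
      have e4 : (fun v : {s : Finset (Fin m) // s.card = p + 1} =>
          glue A c ⟨insert (Fin.last m) (up v.1), by
            rw [Finset.card_insert_of_notMem (last_not_mem_up v.1), card_up, v.2]⟩) = c :=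
        funext fun v => glue_insert A c v.1 _
      rw [e4, hc]
    · have htcard : (down s.1).card = p + 1 := by rw [card_down hL, s.2]
      have hs : s = ⟨up (down s.1), by rw [card_up, htcard]⟩ :=
        Subtype.ext (up_down hL).symm
      rw [hs, lemA f (p + 1) (glue A c) _ htcard]
      have e3 : (fun t' : {s : Finset (Fin m) // s.card = p + 2} =>
          glue A c ⟨up t'.1, by rw [card_up, t'.2]⟩) = A :=
        funext fun t' => glue_up A c t'.1 _
      rw [e3, hA, glue_insert A c _ _]
      show (fun t' : {s : Finset (Fin m) // s.card = p + 1} =>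
            x ⟨up t'.1, by rw [card_up, t'.2]⟩) ⟨down s.1, htcard⟩
          - ((-1 : R) ^ (p + 1) * f (Fin.last m)) * c ⟨down s.1, htcard⟩
          + (-1 : R) ^ (p + 1) * f (Fin.last m) * c ⟨down s.1, htcard⟩ = _
      rw [sub_add_cancel]

end KoszulAux

/-- Let `f₁, ..., f_m` be a regular sequence in a commutative ring
`R`.  Then the Koszul complex `0 → R ⊗ Λ^m → ... → R ⊗ Λ^1 → R → 0` is a free
resolution of `R/(f₁,...,f_m)`: its homology vanishes in positive degrees (every
cycle in degree `p ≥ 1` is a boundary), and in degree zero it equals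
`R/(f₁,...,f_m)` (the image of `K 1 → K 0 = R` is exactly the ideal
`(f₁, ..., f_m)`). -/
theorem koszul_complex_resolution {R : Type*} [CommRing R] {m : ℕ}
    (f : Fin m → R) (hreg : RingTheory.Sequence.IsRegular R (List.ofFn f)) :
    (∀ (p : ℕ) (x : KoszulTerm R m (p + 1)),
        (∀ t, koszulD f p x t = 0) → ∃ y : KoszulTerm R m (p + 2), koszulD f (p + 1) y = x) ∧
    (Set.range (fun x : KoszulTerm R m 1 =>
        koszulD f 0 x ⟨∅, Finset.card_empty⟩) = ↑(Ideal.span (Set.range f))) := by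
  constructor
  · intro p x hx
    exact KoszulAux.main m f hreg.toIsWeaklyRegular p x hx
  · exact KoszulAux.part2 f

end
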